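/- The state W = e₁⊗e₀⊗e₀ + e₀⊗e₁⊗e₀ + e₀⊗e₀⊗e₁ ∈ ℂ² ⊗ ℂ² ⊗ ℂ² cannot be written as a sum of two rank-one tensors: there are no vectors a, b, c, a', b', c' ∈ ℂ² with W = a⊗b⊗c + a'⊗b'⊗c'. (W has tensor rank 3; it lies on the tangential variety but on no honest secant line of the Segre variety.) -/

import Mathlib

open TensorProduct

noncomputable section

/-- The single-qubit space ℂ². -/
abbrev Qubit : Type := Fin 2 → ℂ

/-- The three-qubit Hilbert space ℂ² ⊗ ℂ² ⊗ ℂ². -/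
abbrev ThreeQubit : Type := Qubit ⊗[ℂ] (Qubit ⊗[ℂ] Qubit)

/-- Standard basis vector e₀ of ℂ². -/
def e0 : Qubit := ![1, 0]

/-- Standard basis vector e₁ of ℂ². -/
def e1 : Qubit := ![0, 1]

/-- SLOCC equivalence: ψ and φ are related by invertible local linear maps. -/
def SLOCC (ψ φ : ThreeQubit) : Prop :=
  ∃ g₁ g₂ g₃ : Qubit ≃ₗ[ℂ] Qubit,
    TensorProduct.map g₁.toLinearMap
      (TensorProduct.map g₂.toLinearMap g₃.toLinearMap) ψ = φ

def SepState : ThreeQubit := e0 ⊗ₜ[ℂ] (e0 ⊗ₜ[ℂ] e0)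
def B1 : ThreeQubit := e0 ⊗ₜ[ℂ] (e0 ⊗ₜ[ℂ] e0) + e0 ⊗ₜ[ℂ] (e1 ⊗ₜ[ℂ] e1)
def B2 : ThreeQubit := e0 ⊗ₜ[ℂ] (e0 ⊗ₜ[ℂ] e0) + e1 ⊗ₜ[ℂ] (e0 ⊗ₜ[ℂ] e1)
def B3 : ThreeQubit := e0 ⊗ₜ[ℂ] (e0 ⊗ₜ[ℂ] e0) + e1 ⊗ₜ[ℂ] (e1 ⊗ₜ[ℂ] e0)
def W : ThreeQubit := e1 ⊗ₜ[ℂ] (e0 ⊗ₜ[ℂ] e0) + e0 ⊗ₜ[ℂ] (e1 ⊗ₜ[ℂ] e0) + e0 ⊗ₜ[ℂ] (e0 ⊗ₜ[ℂ] e1)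
def GHZ : ThreeQubit := e0 ⊗ₜ[ℂ] (e0 ⊗ₜ[ℂ] e0) + e1 ⊗ₜ[ℂ] (e1 ⊗ₜ[ℂ] e1)

/-- The W state has tensor rank 3: it is not a sum of two rank-one tensors. -/
theorem W_not_sum_of_two_rank_one :
    ¬ ∃ a b c a' b' c' : Qubit, W = a ⊗ₜ[ℂ] (b ⊗ₜ[ℂ] c) + a' ⊗ₜ[ℂ] (b' ⊗ₜ[ℂ] c') := by
  rintro ⟨a, b, c, a', b', c', heq⟩
  let f : Fin 2 → (Qubit →ₗ[ℂ] ℂ) := fun i => LinearMap.proj i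
  let g : Fin 2 → Fin 2 → ((Qubit ⊗[ℂ] Qubit) →ₗ[ℂ] ℂ) := fun j k =>
    TensorProduct.lift ((f j).smulRight (f k))
  let F : Fin 2 → Fin 2 → Fin 2 → (ThreeQubit →ₗ[ℂ] ℂ) := fun i j k =>
    TensorProduct.lift ((f i).smulRight (g j k))
  have key : ∀ i j k : Fin 2, a i * (b j * c k) + a' i * (b' j * c' k) = F i j k W := by
    intro i j k
    rw [heq]
    simp [F, g, f, smul_eq_mul]
  have h000 := key 0 0 0
  have h001 := key 0 0 1
  have h010 := key 0 1 0
  have h011 := key 0 1 1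
  have h100 := key 1 0 0
  have h101 := key 1 0 1
  have h110 := key 1 1 0
  have h111 := key 1 1 1
  simp [F, g, f, W, e0, e1, smul_eq_mul] at h000 h001 h010 h011 h100 h101 h110 h111
  set P := (b 0 * b' 1 - b 1 * b' 0) * (c 0 * c' 1 - c 1 * c' 0) with hPdef
  have key1 : a 0 * a' 0 * P = -1 := by
    linear_combination (a 0 * (b 1 * c 1) + a' 0 * (b' 1 * c' 1)) * h000
      - (a 0 * (b 1 * c 0) + a' 0 * (b' 1 * c' 0)) * h001 - h010
  have key2 : a 1 * a' 1 * P = 0 := by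
    linear_combination (a 1 * (b 1 * c 1) + a' 1 * (b' 1 * c' 1)) * h100 + h111
      - (a 1 * (b 0 * c 1) + a' 1 * (b' 0 * c' 1)) * h110
  have key3 : (a 0 * a' 1 + a 1 * a' 0) * P = 0 := by
    linear_combination (a 1 * (b 1 * c 1) + a' 1 * (b' 1 * c' 1)) * h000
      + (a 0 * (b 1 * c 1) + a' 0 * (b' 1 * c' 1)) * h100 + h011
      - (a 1 * (b 1 * c 0) + a' 1 * (b' 1 * c' 0)) * h001 - h110
      - (a 1 * (b 0 * c 1) + a' 1 * (b' 0 * c' 1)) * h010 - h101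
  have hP : P ≠ 0 := by
    intro h
    rw [h, mul_zero] at key1
    exact (by norm_num : (0:ℂ) ≠ -1) key1
  have h1 : a 1 * a' 1 = 0 := by
    rcases mul_eq_zero.mp key2 with h | h
    · exact h
    · exact absurd h hP
  rcases mul_eq_zero.mp h1 with ha | ha
  · have h2 : a 0 * a' 1 * P = 0 := by linear_combination key3 - a' 0 * P * ha
    rcases mul_eq_zero.mp h2 with h3 | h3
    · rcases mul_eq_zero.mp h3 with h4 | h4
      · have : (0:ℂ) = -1 := by linear_combination key1 - a' 0 * P * h4
        norm_num at this
      · have : (0:ℂ) = 1 := by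
          linear_combination h100 - (b 0 * c 0) * ha - (b' 0 * c' 0) * h4
        norm_num at this
    · exact absurd h3 hP
  · have h2 : a 1 * a' 0 * P = 0 := by linear_combination key3 - a 0 * P * ha
    rcases mul_eq_zero.mp h2 with h3 | h3
    · rcases mul_eq_zero.mp h3 with h4 | h4
      · have : (0:ℂ) = 1 := by
          linear_combination h100 - (b 0 * c 0) * h4 - (b' 0 * c' 0) * ha
        norm_num at this
      · have : (0:ℂ) = -1 := by linear_combination key1 - a 0 * P * h4
        norm_num at this
    · exact absurd h3 hP


end
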